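/- Let X_1, X_2, W, F_1,...,F_r be finite random variables such that for every i in [1:r] the Markov chain F_i - F_{[1:i-1]} X_{(i)_2} - X_{(i+1)_2} holds. Then Sum_{i=1}^r ( I(F_i; X_{(i+1)_2} | F_{[1:i-1]}) - I(F_i; W | F_{[1:i-1]}) ) = I(X_1;X_2) - I(X_1;X_2 | F_{[1:r]}) - I(F_{[1:r]}; W). In particular, taking W = (Z,S), the achievable key rate of the simultaneous simulation and key-generation theorem satisfies R_0 + Sum_{i=1}^r ( I(F_i; X_{(i+1)_2} | F_{[1:i-1]}) - I(F_i; Z,S | F_{[1:i-1]}) ) = R_0 + I(X_1;X_2) - I(X_1;X_2|F_{[1:r]}) - I(F_{[1:r]}; Z,S). -/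

import Mathlib

open scoped BigOperators

namespace InfoTheory

variable {Ω : Type*} [Fintype Ω]

/-- `p` is a probability mass function on the finite type `Ω`. -/
def IsPMF (p : Ω → ℝ) : Prop := (∀ ω, 0 ≤ p ω) ∧ ∑ ω, p ω = 1

/-- Distribution of the random variable `A` under `p`. -/
noncomputable def rvDist {α : Type*} [Fintype α] [DecidableEq α]
    (p : Ω → ℝ) (A : Ω → α) (a : α) : ℝ :=
  ∑ ω, if A ω = a then p ω else 0

/-- Shannon entropy (base 2) of the random variable `A` under `p`. -/
noncomputable def entH {α : Type*} [Fintype α] [DecidableEq α]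
    (p : Ω → ℝ) (A : Ω → α) : ℝ :=
  -∑ a, rvDist p A a * Real.logb 2 (rvDist p A a)

/-- Conditional entropy `H(A|B)`. -/
noncomputable def condH {α β : Type*} [Fintype α] [DecidableEq α] [Fintype β] [DecidableEq β]
    (p : Ω → ℝ) (A : Ω → α) (B : Ω → β) : ℝ :=
  entH p (fun ω => (A ω, B ω)) - entH p B

/-- Mutual information `I(A;B)`. -/
noncomputable def mi {α β : Type*} [Fintype α] [DecidableEq α] [Fintype β] [DecidableEq β]
    (p : Ω → ℝ) (A : Ω → α) (B : Ω → β) : ℝ :=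
  entH p A + entH p B - entH p (fun ω => (A ω, B ω))

/-- Conditional mutual information `I(A;B|C)`. -/
noncomputable def cmi {α β γ : Type*} [Fintype α] [DecidableEq α] [Fintype β] [DecidableEq β]
    [Fintype γ] [DecidableEq γ]
    (p : Ω → ℝ) (A : Ω → α) (B : Ω → β) (C : Ω → γ) : ℝ :=
  condH p A C + condH p B C - condH p (fun ω => (A ω, B ω)) C

/-- Markov chain `A - B - C`: `A` and `C` are conditionally independent given `B`. -/
def Markov {α β γ : Type*} [Fintype α] [DecidableEq α] [Fintype β] [DecidableEq β]
    [Fintype γ] [DecidableEq γ]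
    (p : Ω → ℝ) (A : Ω → α) (B : Ω → β) (C : Ω → γ) : Prop :=
  ∀ a b c, rvDist p (fun ω => ((A ω, B ω), C ω)) ((a, b), c) * rvDist p B b
    = rvDist p (fun ω => (A ω, B ω)) (a, b) * rvDist p (fun ω => (B ω, C ω)) (b, c)

/-- Total variation distance between two pmfs on the finite type `α`. -/
noncomputable def TV {α : Type*} [Fintype α] (p q : α → ℝ) : ℝ :=
  (∑ a, |p a - q a|) / 2

/-- The prefix `F_{[1:k]}` of a finite family of random variables, encoded by replacing
the coordinates beyond `k` by `none`. -/
def Fpre {r : ℕ} {𝓕 : Fin r → Type*} (F : ∀ i : Fin r, Ω → 𝓕 i) (k : ℕ) :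
    Ω → ∀ j : Fin r, Option (𝓕 j) :=
  fun ω j => if (j : ℕ) < k then some (F j ω) else none

/-- The full tuple `F_{[1:r]}`. -/
def Ffull {r : ℕ} {𝓕 : Fin r → Type*} (F : ∀ i : Fin r, Ω → 𝓕 i) :
    Ω → ∀ j : Fin r, 𝓕 j :=
  fun ω j => F j ω

end InfoTheory

open InfoTheory
section Aux

variable {Ω : Type*} [Fintype Ω] {p : Ω → ℝ}

private lemma rvDist_congr {α β : Type*} [Fintype α] [DecidableEq α] [Fintype β] [DecidableEq β]
    (p : Ω → ℝ) (U : Ω → α) (V : Ω → β) (a : α) (b : β)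
    (h : ∀ ω, U ω = a ↔ V ω = b) : rvDist p U a = rvDist p V b := by
  unfold rvDist
  exact Finset.sum_congr rfl fun ω _ => by simp only [h ω]

private lemma rvDist_self_le (hp1 : ∀ ω, 0 ≤ p ω)
    {α : Type*} [Fintype α] [DecidableEq α] (U : Ω → α) (ω : Ω) :
    p ω ≤ rvDist p U (U ω) := by
  unfold rvDist
  have h := Finset.single_le_sum (f := fun ω' => if U ω' = U ω then p ω' else 0)
    (fun ω' _ => by split <;> simp [hp1 ω']) (Finset.mem_univ ω)
  simpa using h

private lemma entH_omega {α : Type*} [Fintype α] [DecidableEq α]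
    (p : Ω → ℝ) (U : Ω → α) :
    entH p U = -∑ ω, p ω * Real.logb 2 (rvDist p U (U ω)) := by
  unfold entH
  congr 1
  calc ∑ a, rvDist p U a * Real.logb 2 (rvDist p U a)
      = ∑ a, ∑ ω, (if U ω = a then p ω * Real.logb 2 (rvDist p U a) else 0) := by
        refine Finset.sum_congr rfl fun a _ => ?_
        rw [rvDist, Finset.sum_mul]
        exact Finset.sum_congr rfl fun ω _ => by split <;> simp
    _ = ∑ ω, ∑ a, (if U ω = a then p ω * Real.logb 2 (rvDist p U a) else 0) :=
        Finset.sum_comm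
    _ = ∑ ω, p ω * Real.logb 2 (rvDist p U (U ω)) := by
        refine Finset.sum_congr rfl fun ω _ => ?_
        rw [Finset.sum_ite_eq Finset.univ (U ω)
          (fun a => p ω * Real.logb 2 (rvDist p U a))]
        simp

private lemma entH_congr {α β : Type*} [Fintype α] [DecidableEq α] [Fintype β] [DecidableEq β]
    (p : Ω → ℝ) (U : Ω → α) (V : Ω → β)
    (h : ∀ ω ω', U ω = U ω' ↔ V ω = V ω') :
    entH p U = entH p V := by
  rw [entH_omega, entH_omega]
  congr 1
  refine Finset.sum_congr rfl fun ω _ => ?_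
  rw [rvDist_congr p U V (U ω) (V ω) (fun ω' => h ω' ω)]

private lemma entH_pair_eq {α β γ δ : Type*} [Fintype α] [DecidableEq α] [Fintype β]
    [DecidableEq β] [Fintype γ] [DecidableEq γ] [Fintype δ] [DecidableEq δ]
    (hp1 : ∀ ω, 0 ≤ p ω) (U : Ω → α) (V : Ω → β) (U' : Ω → γ) (V' : Ω → δ)
    (h : ∀ ω, rvDist p U (U ω) * rvDist p V (V ω)
        = rvDist p U' (U' ω) * rvDist p V' (V' ω)) :
    entH p U + entH p V = entH p U' + entH p V' := by
  rw [entH_omega p U, entH_omega p V, entH_omega p U', entH_omega p V',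
    ← neg_add, ← neg_add, ← Finset.sum_add_distrib, ← Finset.sum_add_distrib]
  congr 1
  refine Finset.sum_congr rfl fun ω _ => ?_
  rcases (hp1 ω).eq_or_lt with h0 | h0
  · simp [← h0]
  · have hU := lt_of_lt_of_le h0 (rvDist_self_le hp1 U ω)
    have hV := lt_of_lt_of_le h0 (rvDist_self_le hp1 V ω)
    have hU' := lt_of_lt_of_le h0 (rvDist_self_le hp1 U' ω)
    have hV' := lt_of_lt_of_le h0 (rvDist_self_le hp1 V' ω)
    rw [← mul_add, ← mul_add, ← Real.logb_mul hU.ne' hV.ne',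
      ← Real.logb_mul hU'.ne' hV'.ne', h ω]

/-- Markov chain `A - B - C` implies `I(A;C|B) = 0`. -/
private lemma cmi_markov {α β γ : Type*} [Fintype α] [DecidableEq α] [Fintype β]
    [DecidableEq β] [Fintype γ] [DecidableEq γ]
    (hp1 : ∀ ω, 0 ≤ p ω) (A : Ω → α) (B : Ω → β) (C : Ω → γ)
    (h : Markov p A B C) : cmi p A C B = 0 := by
  have key := entH_pair_eq hp1 (fun ω => (A ω, B ω)) (fun ω => (C ω, B ω))
    (fun ω => ((A ω, C ω), B ω)) B (fun ω => ?_)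
  · simp only [cmi, condH]
    linarith [key]
  · have hM := h (A ω) (B ω) (C ω)
    have h1 : rvDist p (fun ω' => ((A ω', B ω'), C ω')) ((A ω, B ω), C ω)
        = rvDist p (fun ω' => ((A ω', C ω'), B ω')) ((A ω, C ω), B ω) :=
      rvDist_congr p _ _ _ _ (fun ω' => by simp only [Prod.mk.injEq]; tauto)
    have h2 : rvDist p (fun ω' => (B ω', C ω')) (B ω, C ω)
        = rvDist p (fun ω' => (C ω', B ω')) (C ω, B ω) :=
      rvDist_congr p _ _ _ _ (fun ω' => by simp only [Prod.mk.injEq]; tauto)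
    rw [h1, h2] at hM
    linarith [hM]

private lemma entH_const {α : Type*} [Fintype α] [DecidableEq α]
    (hp : IsPMF p) (c : α) : entH p (fun _ => c) = 0 := by
  unfold entH
  rw [Finset.sum_eq_zero, neg_zero]
  intro a _
  by_cases hac : c = a
  · subst hac
    have : rvDist p (fun _ => c) c = 1 := by
      unfold rvDist; simp [hp.2]
    rw [this]; simp
  · have : rvDist p (fun _ => c) a = 0 := by
      unfold rvDist; simp [hac]
    rw [this]; simp

private lemma entH_of_const {α : Type*} [Fintype α] [DecidableEq α]
    (hp : IsPMF p) (C : Ω → α) (hC : ∀ ω ω', C ω = C ω') : entH p C = 0 := by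
  rcases isEmpty_or_nonempty Ω with h | h
  · exfalso
    have h2 := hp.2
    rw [Finset.univ_eq_empty, Finset.sum_empty] at h2
    exact zero_ne_one h2
  · obtain ⟨ω₀⟩ := h
    have : C = fun _ => C ω₀ := funext fun ω => hC ω ω₀
    rw [this, entH_const hp]

private lemma cmi_comm {α β γ : Type*} [Fintype α] [DecidableEq α] [Fintype β]
    [DecidableEq β] [Fintype γ] [DecidableEq γ]
    (p : Ω → ℝ) (A : Ω → α) (B : Ω → β) (C : Ω → γ) :
    cmi p A B C = cmi p B A C := by
  simp only [cmi, condH]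
  rw [entH_congr p (fun ω => ((A ω, B ω), C ω)) (fun ω => ((B ω, A ω), C ω))
    (fun ω ω' => by simp only [Prod.mk.injEq]; tauto)]
  ring

private lemma cmi_congr {α β γ γ' : Type*} [Fintype α] [DecidableEq α] [Fintype β]
    [DecidableEq β] [Fintype γ] [DecidableEq γ] [Fintype γ'] [DecidableEq γ']
    (p : Ω → ℝ) (A : Ω → α) (B : Ω → β) (C : Ω → γ) (C' : Ω → γ')
    (h : ∀ ω ω', C ω = C ω' ↔ C' ω = C' ω') :
    cmi p A B C = cmi p A B C' := by
  simp only [cmi, condH]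
  rw [entH_congr p C C' h,
    entH_congr p (fun ω => (A ω, C ω)) (fun ω => (A ω, C' ω))
      (fun ω ω' => by simp [Prod.mk.injEq, h ω ω']),
    entH_congr p (fun ω => (B ω, C ω)) (fun ω => (B ω, C' ω))
      (fun ω ω' => by simp [Prod.mk.injEq, h ω ω']),
    entH_congr p (fun ω => ((A ω, B ω), C ω)) (fun ω => ((A ω, B ω), C' ω))
      (fun ω ω' => by simp [Prod.mk.injEq, h ω ω'])]

private lemma mi_congr_left {α γ γ' : Type*} [Fintype α] [DecidableEq α]
    [Fintype γ] [DecidableEq γ] [Fintype γ'] [DecidableEq γ']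
    (p : Ω → ℝ) (C : Ω → γ) (C' : Ω → γ') (A : Ω → α)
    (h : ∀ ω ω', C ω = C ω' ↔ C' ω = C' ω') :
    mi p C A = mi p C' A := by
  simp only [mi]
  rw [entH_congr p C C' h,
    entH_congr p (fun ω => (C ω, A ω)) (fun ω => (C' ω, A ω))
      (fun ω ω' => by simp [Prod.mk.injEq, h ω ω'])]

/-- chain-rule identity `I(F;W|C) = I(F,C;W) - I(C;W)` (pure relabelling algebra). -/
private lemma cmi_eq_mi_sub_mi {φ δ γ : Type*} [Fintype φ] [DecidableEq φ]
    [Fintype δ] [DecidableEq δ] [Fintype γ] [DecidableEq γ]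
    (p : Ω → ℝ) (Fi : Ω → φ) (W : Ω → δ) (C : Ω → γ) :
    cmi p Fi W C = mi p (fun ω => (Fi ω, C ω)) W - mi p C W := by
  simp only [cmi, condH, mi]
  rw [entH_congr p (fun ω => ((Fi ω, C ω), W ω)) (fun ω => ((Fi ω, W ω), C ω))
      (fun ω ω' => by simp only [Prod.mk.injEq]; tauto),
    entH_congr p (fun ω => (C ω, W ω)) (fun ω => (W ω, C ω))
      (fun ω ω' => by simp only [Prod.mk.injEq]; tauto)]
  ring

/-- `I(F;X2|C) = I(X1;X2|C) - I(X1;X2|(F,C)) + I(F;X2|(C,X1))` (pure relabelling algebra). -/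
private lemma cmi_ident {α₁ α₂ φ γ : Type*} [Fintype α₁] [DecidableEq α₁]
    [Fintype α₂] [DecidableEq α₂] [Fintype φ] [DecidableEq φ] [Fintype γ] [DecidableEq γ]
    (p : Ω → ℝ) (X1 : Ω → α₁) (X2 : Ω → α₂) (Fi : Ω → φ) (C : Ω → γ) :
    cmi p Fi X2 C = cmi p X1 X2 C - cmi p X1 X2 (fun ω => (Fi ω, C ω))
      + cmi p Fi X2 (fun ω => (C ω, X1 ω)) := by
  simp only [cmi, condH]
  rw [entH_congr p (fun ω => (X2 ω, (Fi ω, C ω))) (fun ω => ((Fi ω, X2 ω), C ω))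
      (fun ω ω' => by simp only [Prod.mk.injEq]; tauto),
    entH_congr p (fun ω => (X2 ω, (C ω, X1 ω))) (fun ω => ((X1 ω, X2 ω), C ω))
      (fun ω ω' => by simp only [Prod.mk.injEq]; tauto),
    entH_congr p (fun ω => (Fi ω, (C ω, X1 ω))) (fun ω => (X1 ω, (Fi ω, C ω)))
      (fun ω ω' => by simp only [Prod.mk.injEq]; tauto),
    entH_congr p (fun ω => ((X1 ω, X2 ω), (Fi ω, C ω)))
      (fun ω => ((Fi ω, X2 ω), (C ω, X1 ω)))
      (fun ω ω' => by simp only [Prod.mk.injEq]; tauto),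
    entH_congr p (fun ω => (C ω, X1 ω)) (fun ω => (X1 ω, C ω))
      (fun ω ω' => by simp only [Prod.mk.injEq]; tauto)]
  ring

private lemma cmi_const_cond {α β γ : Type*} [Fintype α] [DecidableEq α] [Fintype β]
    [DecidableEq β] [Fintype γ] [DecidableEq γ]
    (hp : IsPMF p) (A : Ω → α) (B : Ω → β) (C : Ω → γ)
    (hC : ∀ ω ω', C ω = C ω') : cmi p A B C = mi p A B := by
  simp only [cmi, condH, mi]
  rw [entH_of_const hp C hC,
    entH_congr p (fun ω => (A ω, C ω)) A
      (fun ω ω' => by simp [Prod.mk.injEq, hC ω ω']),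
    entH_congr p (fun ω => (B ω, C ω)) B
      (fun ω ω' => by simp [Prod.mk.injEq, hC ω ω']),
    entH_congr p (fun ω => ((A ω, B ω), C ω)) (fun ω => (A ω, B ω))
      (fun ω ω' => by simp [Prod.mk.injEq, hC ω ω'])]
  ring

private lemma mi_const_left {α γ : Type*} [Fintype α] [DecidableEq α]
    [Fintype γ] [DecidableEq γ]
    (hp : IsPMF p) (C : Ω → γ) (A : Ω → α)
    (hC : ∀ ω ω', C ω = C ω') : mi p C A = 0 := by
  simp only [mi]
  rw [entH_of_const hp C hC,
    entH_congr p (fun ω => (C ω, A ω)) A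
      (fun ω ω' => by simp [Prod.mk.injEq, hC ω ω'])]
  ring

private lemma fpre_succ_iff {r : ℕ} {𝓕 : Fin r → Type*}
    (F : ∀ i : Fin r, Ω → 𝓕 i) (i : Fin r) (ω ω' : Ω) :
    Fpre F ((i : ℕ) + 1) ω = Fpre F ((i : ℕ) + 1) ω' ↔
      (F i ω = F i ω' ∧ Fpre F (i : ℕ) ω = Fpre F (i : ℕ) ω') := by
  simp only [Fpre, funext_iff]
  constructor
  · intro h
    refine ⟨?_, fun j => ?_⟩
    · have := h i
      simpa using this
    · have := h j
      by_cases hj : (j : ℕ) < (i : ℕ)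
      · have hj' : (j : ℕ) < (i : ℕ) + 1 := Nat.lt_succ_of_lt hj
        simp only [if_pos hj, if_pos hj'] at this ⊢
        exact this
      · simp [hj]
  · rintro ⟨h1, h2⟩ j
    by_cases hj : (j : ℕ) < (i : ℕ) + 1
    · rcases Nat.lt_succ_iff_lt_or_eq.mp hj with hj' | hj'
      · have := h2 j
        simp only [if_pos hj'] at this
        simp only [if_pos hj]
        exact this
      · have hji : j = i := Fin.ext hj'
        subst hji
        simp [hj, h1]
    · simp [hj]

private lemma fpre_zero_const {r : ℕ} {𝓕 : Fin r → Type*}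
    (F : ∀ i : Fin r, Ω → 𝓕 i) (ω ω' : Ω) : Fpre F 0 ω = Fpre F 0 ω' := by
  funext j; simp [Fpre]

private lemma main_identity {Ω 𝒳₁ 𝒳₂ 𝒲 : Type*} [Fintype Ω] [Fintype 𝒳₁] [DecidableEq 𝒳₁]
    [Fintype 𝒳₂] [DecidableEq 𝒳₂] [Fintype 𝒲] [DecidableEq 𝒲] {r : ℕ}
    {𝓕 : Fin r → Type*} [∀ i, Fintype (𝓕 i)] [∀ i, DecidableEq (𝓕 i)]
    (p : Ω → ℝ) (hp : IsPMF p)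
    (X1 : Ω → 𝒳₁) (X2 : Ω → 𝒳₂) (W : Ω → 𝒲)
    (F : ∀ i : Fin r, Ω → 𝓕 i)
    (hMarkov : ∀ i : Fin r,
      (Even (i : ℕ) →
        Markov p (F i) (fun ω => (Fpre F (i : ℕ) ω, X1 ω)) X2) ∧
      (¬ Even (i : ℕ) →
        Markov p (F i) (fun ω => (Fpre F (i : ℕ) ω, X2 ω)) X1)) :
    (∑ i : Fin r,
        ((if Even (i : ℕ) then cmi p (F i) X2 (Fpre F (i : ℕ))
          else cmi p (F i) X1 (Fpre F (i : ℕ)))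
          - cmi p (F i) W (Fpre F (i : ℕ))))
      = mi p X1 X2 - cmi p X1 X2 (Fpre F r) - mi p (Fpre F r) W := by
  classical
  have hstep : ∀ i : Fin r,
      ((if Even (i : ℕ) then cmi p (F i) X2 (Fpre F (i : ℕ))
          else cmi p (F i) X1 (Fpre F (i : ℕ)))
          - cmi p (F i) W (Fpre F (i : ℕ)))
      = (cmi p X1 X2 (Fpre F (i : ℕ)) - cmi p X1 X2 (Fpre F ((i : ℕ) + 1)))
        - (mi p (Fpre F ((i : ℕ) + 1)) W - mi p (Fpre F (i : ℕ)) W) := by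
    intro i
    have hW : cmi p (F i) W (Fpre F (i : ℕ))
        = mi p (Fpre F ((i : ℕ) + 1)) W - mi p (Fpre F (i : ℕ)) W := by
      rw [cmi_eq_mi_sub_mi p (F i) W (Fpre F (i : ℕ)),
        mi_congr_left p (fun ω => (F i ω, Fpre F (i : ℕ) ω)) (Fpre F ((i : ℕ) + 1)) W
          (fun ω ω' => by
            simp only [Prod.mk.injEq]
            exact (fpre_succ_iff F i ω ω').symm)]
    have hC : cmi p X1 X2 (Fpre F ((i : ℕ) + 1))
        = cmi p X1 X2 (fun ω => (F i ω, Fpre F (i : ℕ) ω)) :=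
      cmi_congr p X1 X2 _ _ (fun ω ω' => by
        rw [fpre_succ_iff F i ω ω']
        simp [Prod.mk.injEq])
    have hX : (if Even (i : ℕ) then cmi p (F i) X2 (Fpre F (i : ℕ))
          else cmi p (F i) X1 (Fpre F (i : ℕ)))
        = cmi p X1 X2 (Fpre F (i : ℕ)) - cmi p X1 X2 (Fpre F ((i : ℕ) + 1)) := by
      by_cases he : Even (i : ℕ)
      · rw [if_pos he, hC, cmi_ident p X1 X2 (F i) (Fpre F (i : ℕ)),
          cmi_markov hp.1 (F i) (fun ω => (Fpre F (i : ℕ) ω, X1 ω)) X2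
            ((hMarkov i).1 he)]
        ring
      · rw [if_neg he, hC]
        have hid := cmi_ident p X2 X1 (F i) (Fpre F (i : ℕ))
        rw [cmi_markov hp.1 (F i) (fun ω => (Fpre F (i : ℕ) ω, X2 ω)) X1
          ((hMarkov i).2 he)] at hid
        rw [hid, cmi_comm p X2 X1 (Fpre F (i : ℕ)),
          cmi_comm p X2 X1 (fun ω => (F i ω, Fpre F (i : ℕ) ω))]
        ring
    rw [hX, hW]
  calc (∑ i : Fin r,
        ((if Even (i : ℕ) then cmi p (F i) X2 (Fpre F (i : ℕ))
          else cmi p (F i) X1 (Fpre F (i : ℕ)))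
          - cmi p (F i) W (Fpre F (i : ℕ))))
      = ∑ i : Fin r,
          ((cmi p X1 X2 (Fpre F (i : ℕ)) - cmi p X1 X2 (Fpre F ((i : ℕ) + 1)))
            - (mi p (Fpre F ((i : ℕ) + 1)) W - mi p (Fpre F (i : ℕ)) W)) :=
        Finset.sum_congr rfl fun i _ => hstep i
    _ = ∑ k ∈ Finset.range r,
          ((cmi p X1 X2 (Fpre F k) - cmi p X1 X2 (Fpre F (k + 1)))
            - (mi p (Fpre F (k + 1)) W - mi p (Fpre F k) W)) :=
        Fin.sum_univ_eq_sum_range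
          (fun k => (cmi p X1 X2 (Fpre F k) - cmi p X1 X2 (Fpre F (k + 1)))
            - (mi p (Fpre F (k + 1)) W - mi p (Fpre F k) W)) r
    _ = (∑ k ∈ Finset.range r, (cmi p X1 X2 (Fpre F k) - cmi p X1 X2 (Fpre F (k + 1))))
          - ∑ k ∈ Finset.range r, (mi p (Fpre F (k + 1)) W - mi p (Fpre F k) W) :=
        Finset.sum_sub_distrib _ _
    _ = (cmi p X1 X2 (Fpre F 0) - cmi p X1 X2 (Fpre F r))
          - (mi p (Fpre F r) W - mi p (Fpre F 0) W) := by
        rw [Finset.sum_range_sub' (fun k => cmi p X1 X2 (Fpre F k)),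
          Finset.sum_range_sub (fun k => mi p (Fpre F k) W)]
    _ = mi p X1 X2 - cmi p X1 X2 (Fpre F r) - mi p (Fpre F r) W := by
        rw [cmi_const_cond hp X1 X2 (Fpre F 0) (fpre_zero_const F),
          mi_const_left hp (Fpre F 0) W (fpre_zero_const F)]
        ring

end Aux


/-- Under the Markov chains `F_i - F_{[1:i-1]} X_{(i)_2} - X_{(i+1)_2}`
(rounds indexed by `i : Fin r`, `i` corresponding to round `i+1`, so odd rounds are those with
`Even (i : ℕ)`), for any further random variable `W`:
`∑_{i=1}^r (I(F_i;X_{(i+1)_2}|F_{[1:i-1]}) - I(F_i;W|F_{[1:i-1]}))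
  = I(X_1;X_2) - I(X_1;X_2|F_{[1:r]}) - I(F_{[1:r]};W)`;
in particular, taking `W = (Z,S)`, the achievable key rate of the simultaneous simulation and
key-generation theorem satisfies
`R_0 + ∑_{i=1}^r (I(F_i;X_{(i+1)_2}|F_{[1:i-1]}) - I(F_i;Z,S|F_{[1:i-1]}))
  = R_0 + I(X_1;X_2) - I(X_1;X_2|F_{[1:r]}) - I(F_{[1:r]};Z,S)`. -/
theorem sum_cmi_sub_cmi_eq_mi_sub
    {Ω 𝒳₁ 𝒳₂ 𝒲 𝒵 𝒮 : Type*} [Fintype Ω] [Fintype 𝒳₁] [DecidableEq 𝒳₁]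
    [Fintype 𝒳₂] [DecidableEq 𝒳₂] [Fintype 𝒲] [DecidableEq 𝒲]
    [Fintype 𝒵] [DecidableEq 𝒵] [Fintype 𝒮] [DecidableEq 𝒮] {r : ℕ}
    {𝓕 : Fin r → Type*} [∀ i, Fintype (𝓕 i)] [∀ i, DecidableEq (𝓕 i)]
    (p : Ω → ℝ) (hp : IsPMF p)
    (X1 : Ω → 𝒳₁) (X2 : Ω → 𝒳₂) (W : Ω → 𝒲) (Z : Ω → 𝒵) (S : Ω → 𝒮)
    (F : ∀ i : Fin r, Ω → 𝓕 i)
    (hMarkov : ∀ i : Fin r,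
      (Even (i : ℕ) →
        Markov p (F i) (fun ω => (Fpre F (i : ℕ) ω, X1 ω)) X2) ∧
      (¬ Even (i : ℕ) →
        Markov p (F i) (fun ω => (Fpre F (i : ℕ) ω, X2 ω)) X1)) :
    ((∑ i : Fin r,
        ((if Even (i : ℕ) then cmi p (F i) X2 (Fpre F (i : ℕ))
          else cmi p (F i) X1 (Fpre F (i : ℕ)))
          - cmi p (F i) W (Fpre F (i : ℕ))))
      = mi p X1 X2 - cmi p X1 X2 (Fpre F r) - mi p (Fpre F r) W)
    ∧ ∀ R0 : ℝ,
      (R0 + ∑ i : Fin r,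
          ((if Even (i : ℕ) then cmi p (F i) X2 (Fpre F (i : ℕ))
            else cmi p (F i) X1 (Fpre F (i : ℕ)))
            - cmi p (F i) (fun ω => (Z ω, S ω)) (Fpre F (i : ℕ))))
        = R0 + (mi p X1 X2 - cmi p X1 X2 (Fpre F r)
            - mi p (Fpre F r) (fun ω => (Z ω, S ω))) := by
  refine ⟨main_identity p hp X1 X2 W F hMarkov, fun R0 => ?_⟩
  rw [main_identity p hp X1 X2 (fun ω => (Z ω, S ω)) F hMarkov]
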